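/- Let F, E : [0, ∞) → ℝ be differentiable functions satisfying F′(t) = −2·F(t)·E(t) and E′(t) = −E(t) for all t ≥ 0, with initial values F(0) = 1/2 and E(0) = 1/2. Then F(t) converges to (1/2)·e^{−1} as t → ∞. -/

import Mathlib

open Filter

lemma aux_const (g : ℝ → ℝ) (hg : ∀ x : ℝ, 0 ≤ x → HasDerivAt g 0 x)
    (t : ℝ) (ht : 0 ≤ t) : g t = g 0 := by
  have := constant_of_has_deriv_right_zero (f := g) (a := 0) (b := t)
    (fun x hx => ((hg x hx.1).continuousAt).continuousWithinAt)
    (fun x hx => (hg x hx.1).hasDerivWithinAt)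
  exact this t ⟨ht, le_refl t⟩

/-- Limiting behavior of the motivating example: the proportion of agents in
state `F` converges to `(1/2)·e⁻¹`. -/
theorem stmt_1 (F E : ℝ → ℝ)
    (hF : ∀ t : ℝ, 0 ≤ t → HasDerivAt F (-2 * F t * E t) t)
    (hE : ∀ t : ℝ, 0 ≤ t → HasDerivAt E (-(E t)) t)
    (hF0 : F 0 = 1 / 2) (hE0 : E 0 = 1 / 2) :
    Tendsto F atTop (nhds ((1 / 2) * Real.exp (-1))) := by
  -- Step 1: E t = (1/2) * exp (-t) for t ≥ 0
  have hEeq : ∀ t : ℝ, 0 ≤ t → E t = (1 / 2) * Real.exp (-t) := by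
    have h0 : ∀ x : ℝ, 0 ≤ x → HasDerivAt (fun t => E t * Real.exp t) 0 x := by
      intro x hx
      have := (hE x hx).mul (Real.hasDerivAt_exp x)
      exact this.congr_deriv (by ring)
    intro t ht
    have h := aux_const _ h0 t ht
    simp only [hE0, Real.exp_zero, mul_one] at h
    have hexp : Real.exp t ≠ 0 := (Real.exp_pos t).ne'
    field_simp [Real.exp_neg] at h ⊢
    rw [Real.exp_neg]; field_simp
    linarith [h]
  -- Step 2: F t = (1/2) * exp (-1) * exp (exp (-t)) for t ≥ 0
  have hFeq : ∀ t : ℝ, 0 ≤ t →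
      F t = (1 / 2) * Real.exp (-1) * Real.exp (Real.exp (-t)) := by
    have h0 : ∀ x : ℝ, 0 ≤ x →
        HasDerivAt (fun t => F t * Real.exp (-(Real.exp (-t)))) 0 x := by
      intro x hx
      have hu : HasDerivAt (fun t : ℝ => -(Real.exp (-t))) (Real.exp (-x)) x := by
        have h1 : HasDerivAt (fun t : ℝ => Real.exp (-t)) (-Real.exp (-x)) x := by
          have := (Real.hasDerivAt_exp (-x)).comp x ((hasDerivAt_id x).neg)
          exact this.congr_deriv (by ring)
        have := h1.neg
        exact this.congr_deriv (by ring)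
      have hv : HasDerivAt (fun t : ℝ => Real.exp (-(Real.exp (-t))))
          (Real.exp (-(Real.exp (-x))) * Real.exp (-x)) x := by
        have := (Real.hasDerivAt_exp (-(Real.exp (-x)))).comp x hu
        exact this
      have := (hF x hx).mul hv
      exact this.congr_deriv (by rw [hEeq x hx]; ring)
    intro t ht
    have h := aux_const _ h0 t ht
    simp only [neg_zero, Real.exp_zero, hF0] at h
    have hne : Real.exp (-(Real.exp (-t))) ≠ 0 := (Real.exp_pos _).ne'
    have : F t = (1 / 2) * Real.exp (-1) / Real.exp (-(Real.exp (-t))) := by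
      field_simp at h ⊢
      linarith [h]
    rw [this, div_eq_iff hne, mul_assoc, ← Real.exp_add]
    simp
  -- Step 3: take the limit
  have hlim : Tendsto (fun t : ℝ => (1 / 2) * Real.exp (-1) * Real.exp (Real.exp (-t)))
      atTop (nhds ((1 / 2) * Real.exp (-1))) := by
    have h1 : Tendsto (fun t : ℝ => Real.exp (-t)) atTop (nhds 0) := by
      exact Real.tendsto_exp_atBot.comp tendsto_neg_atTop_atBot
    have h2 : Tendsto (fun t : ℝ => Real.exp (Real.exp (-t))) atTop (nhds 1) := by
      have := (Real.continuous_exp.tendsto 0).comp h1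
      simpa [Function.comp_def] using this
    have := h2.const_mul ((1 / 2) * Real.exp (-1))
    simpa using this
  exact hlim.congr' ((eventually_ge_atTop 0).mono fun t ht => (hFeq t ht).symm)
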